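/- arXiv:1505.02091 — 2 statements merged into one kernel-verified Lean document; each statement's English description precedes it below -/
import Mathlib

section
/- Closed choice on the natural numbers C_N is Weihrauch equivalent to unique closed choice UC_N, the restriction of C_N to singleton closed subsets of N. -/
/- Common background: type-two computability on Baire space, represented spaces
(representations as functional relations), Weihrauch reducibility, Cantor space,
Martin-Löf tests, Martin-Löf randomness, and the basic multivalued functions
`C_ℕ`, `d_MLR`, `LAY`, the layer map and layerwise computability. -/

namespace WL

abbrev Baire : Type := ℕ → ℕ
abbrev Cantor : Type := ℕ → Bool

/-- The initial segment of length `m` of a point of Baire space. -/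
def initSeg (p : Baire) (m : ℕ) : List ℕ := (List.range m).map p

/-- `l` is a prefix of the sequence `p`. -/
def PrefixOfFun (l : List ℕ) (p : Baire) : Prop := ∀ i : Fin l.length, l.get i = p i

/-- `F` is a computable (partial) function on Baire space, with domain (at least) `D`:
there is a computable monotone word function producing, on longer and longer prefixes of
an input `p ∈ D`, longer and longer prefixes of `F p`. -/
def ComputableOn (F : Baire → Baire) (D : Set Baire) : Prop :=
  ∃ φ : List ℕ → List ℕ, Computable φ ∧ (∀ l l' : List ℕ, l <+: l' → φ l <+: φ l') ∧
    ∀ p ∈ D, (∀ m, PrefixOfFun (φ (initSeg p m)) (F p)) ∧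
      ∀ n, ∃ m, n ≤ (φ (initSeg p m)).length

/-- Pairing on Baire space. -/
def pairB (p q : Baire) : Baire := fun n => if n % 2 = 0 then p (n / 2) else q (n / 2)

def evens (p : Baire) : Baire := fun n => p (2 * n)

def odds (p : Baire) : Baire := fun n => p (2 * n + 1)

/-- `F` is a realizer of the multivalued function `f`, w.r.t. representations
`δX`, `δY` (given as functional relations between names and points). -/
def Realizes {X Y : Type} (δX : Baire → X → Prop) (δY : Baire → Y → Prop)
    (f : X → Set Y) (F : Baire → Baire) : Prop :=
  ∀ p x, δX p x → (f x).Nonempty → ∃ y, δY (F p) y ∧ y ∈ f x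

/-- The names of points in the domain of the multivalued function `f`. -/
def domNames {X Y : Type} (δX : Baire → X → Prop) (f : X → Set Y) : Set Baire :=
  {p | ∃ x, δX p x ∧ (f x).Nonempty}

/-- Weihrauch reducibility `f ≤_W g`. -/
def WRed {X Y Z W : Type} (δX : Baire → X → Prop) (δY : Baire → Y → Prop)
    (δZ : Baire → Z → Prop) (δW : Baire → W → Prop)
    (f : X → Set Y) (g : Z → Set W) : Prop :=
  ∃ H K : Baire → Baire, ComputableOn H (domNames δX f) ∧
    ∀ G : Baire → Baire, Realizes δZ δW g G →
      ComputableOn K {r | ∃ p ∈ domNames δX f, r = pairB p (G (H p))} ∧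
      Realizes δX δY f fun p => K (pairB p (G (H p)))

/-- Weihrauch equivalence. -/
def WEquiv {X Y Z W : Type} (δX : Baire → X → Prop) (δY : Baire → Y → Prop)
    (δZ : Baire → Z → Prop) (δW : Baire → W → Prop)
    (f : X → Set Y) (g : Z → Set W) : Prop :=
  WRed δX δY δZ δW f g ∧ WRed δZ δW δX δY g f

/-- The multivalued function `f` is computable. -/
def ComputableMF {X Y : Type} (δX : Baire → X → Prop) (δY : Baire → Y → Prop)
    (f : X → Set Y) : Prop :=
  ∃ F : Baire → Baire, ComputableOn F (domNames δX f) ∧ Realizes δX δY f F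

/-- Representation of `ℕ`. -/
def repNat : Baire → ℕ → Prop := fun p n => p 0 = n

/-- Representation of Baire space. -/
def repBaire : Baire → Baire → Prop := fun p q => p = q

/-- Representation of Cantor space. -/
def repCantor : Baire → Cantor → Prop := fun p x => ∀ n, p n = if x n then 1 else 0

/-- Representation of closed subsets of `ℕ` by enumerations of their complements. -/
def repClosedNat : Baire → Set ℕ → Prop := fun p A => ∀ n, n ∈ A ↔ ¬ ∃ i, p i = n + 1

/-- Representation of open subsets of `ℕ` by enumerations. -/
def repOpenNat : Baire → Set ℕ → Prop := fun p A => ∀ n, n ∈ A ↔ ∃ i, p i = n + 1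

/-- Product representation. -/
def prodRep {X Z : Type} (δX : Baire → X → Prop) (δZ : Baire → Z → Prop) :
    Baire → X × Z → Prop := fun p xz => δX (evens p) xz.1 ∧ δZ (odds p) xz.2

/-- Representation of countable powers. -/
def seqRep {X : Type} (δX : Baire → X → Prop) : Baire → (ℕ → X) → Prop :=
  fun p xs => ∀ i, δX (fun n => p (Nat.pair i n)) (xs i)

/-- Product of multivalued functions. -/
def prodMF {X Y Z W : Type} (f : X → Set Y) (g : Z → Set W) : X × Z → Set (Y × W) :=
  fun xz => f xz.1 ×ˢ g xz.2

/-- Composition of multivalued functions (with the usual domain condition). -/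
def compMF {X Y Z : Type} (g : Y → Set Z) (f : X → Set Y) : X → Set Z :=
  fun x => {z | (∀ y ∈ f x, (g y).Nonempty) ∧ ∃ y ∈ f x, z ∈ g y}

/-- The cylinder of a finite binary word. -/
def cyl (w : List Bool) : Set Cantor := {x | ∀ i : Fin w.length, x i = w.get i}

/-- Decoding a natural number as a finite binary word. -/
def wordOf (k : ℕ) : List Bool := (Encodable.decode (α := List Bool) k).getD []

/-- The open subset of Cantor space enumerated by `p` (as a union of cylinders). -/
def openOf (p : Baire) : Set Cantor :=
  ⋃ i, if p i = 0 then (∅ : Set Cantor) else cyl (wordOf (p i - 1))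

/-- Representation of open subsets of Cantor space. -/
def repOpenCantor : Baire → Set Cantor → Prop := fun p U => U = openOf p

/-- Representation of closed subsets of Cantor space. -/
def repClosedCantor : Baire → Set Cantor → Prop := fun p A => A = (openOf p)ᶜ

/-- The number of binary words of length `n` whose cylinder is contained in `U`. -/
noncomputable def cylCount (U : Set Cantor) (n : ℕ) : ℕ :=
  Nat.card {w : Fin n → Bool // cyl (List.ofFn w) ⊆ U}

/-- For an open set `U`, `lebLe U i` expresses `λ(U) ≤ 2^{-i}` for the uniform measure. -/
def lebLe (U : Set Cantor) (i : ℕ) : Prop := ∀ n, 2 ^ i * cylCount U n ≤ 2 ^ n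

/-- A Martin-Löf test: a computable sequence of (codes of) open sets `U_i` with
`λ(U_i) ≤ 2^{-i}`. -/
structure MLTest where
  e : ℕ → ℕ → ℕ
  comp : Computable₂ e
  meas : ∀ i, lebLe (openOf (e i)) i

/-- The `i`-th level of a Martin-Löf test. -/
def MLTest.U (T : MLTest) (i : ℕ) : Set Cantor := openOf (T.e i)

/-- Martin-Löf randomness. -/
def MLRandom (x : Cantor) : Prop := ∀ T : MLTest, ∃ i, x ∉ T.U i

/-- A universal Martin-Löf test. -/
def MLTest.Universal (T : MLTest) : Prop := ∀ T' : MLTest, (⋂ i, T'.U i) ⊆ ⋂ i, T.U i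

/-- Closed choice on the naturals, as a multivalued function on `A(ℕ)`. -/
def CN : Set ℕ → Set ℕ := fun A => A

/-- `d_MLR : MLR → {1}`. -/
def dMLR : Cantor → Set ℕ := fun x => {n | MLRandom x ∧ n = 1}

/-- The degree `LAY = C_ℕ × d_MLR`. -/
def LAY : Set ℕ × Cantor → Set (ℕ × ℕ) := prodMF CN dMLR

abbrev repLAYin : Baire → Set ℕ × Cantor → Prop := prodRep repClosedNat repCantor
abbrev repPairNat : Baire → ℕ × ℕ → Prop := prodRep repNat repNat

/-- The layer map of a Martin-Löf test: `n ∈ Lay T x` iff `x ∉ U_n`. -/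
def Lay (T : MLTest) : Cantor → Set ℕ := fun x => {n | MLRandom x ∧ x ∉ T.U n}

/-- The randomness deficiency map: `RD T x = min {n | x ∉ U_n}`. -/
def RD (T : MLTest) : Cantor → Set ℕ := fun x => {n | MLRandom x ∧ IsLeast {m | x ∉ T.U m} n}

/-- `f : MLR ⇉ X` is layerwise computable w.r.t. the test `T`: some computable
`g(p, k)` produces a value in `f p` whenever `p ∉ U_k`. -/
def LayerwiseComputable (T : MLTest) {X : Type} (δX : Baire → X → Prop)
    (f : Cantor → Set X) : Prop :=
  ∃ G : Baire → Baire,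
    ComputableOn G {r | ∃ p x k, repCantor p x ∧ x ∉ T.U k ∧ (f x).Nonempty ∧
      r = pairB p fun _ => k} ∧
    ∀ p x k, repCantor p x → x ∉ T.U k → (f x).Nonempty →
      ∃ y, δX (G (pairB p fun _ => k)) y ∧ y ∈ f x

/-- Layerwise computability for multivalued functions with an additional input. -/
def LayerwiseComputable₂ (T : MLTest) {I X : Type} (δI : Baire → I → Prop)
    (δX : Baire → X → Prop) (f : Cantor × I → Set X) : Prop :=
  ∃ G : Baire → Baire,
    ComputableOn G {r | ∃ p q x i k, repCantor p x ∧ δI q i ∧ x ∉ T.U k ∧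
      (f (x, i)).Nonempty ∧ r = pairB (pairB p q) fun _ => k} ∧
    ∀ p q x i k, repCantor p x → δI q i → x ∉ T.U k → (f (x, i)).Nonempty →
      ∃ y, δX (G (pairB (pairB p q) fun _ => k)) y ∧ y ∈ f (x, i)

/-- `Σ_{i<|w|} (2 w(i) - 1)`: the signed count of a binary word. -/
def signedSum (w : List Bool) : ℤ := (w.count true : ℤ) - (w.count false : ℤ)

/-- The prefix of length `n` of a point of Cantor space. -/
def initBits (x : Cantor) (n : ℕ) : List Bool := List.ofFn fun i : Fin n => x i

/-- Unique closed choice: the restriction of `C_ℕ` to singletons. -/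
def UCN : Set ℕ → Set ℕ := fun A => {n | A = {n}}

lemma le_foldr_max (L : List ℕ) : ∀ x ∈ L, x ≤ L.foldr max 0 := by
  induction L with
  | nil => simp
  | cons a t ih =>
    intro x hx
    rcases List.mem_cons.1 hx with rfl | hx
    · exact le_max_left _ _
    · exact le_trans (ih x hx) (le_max_right _ _)

lemma exists_succ_not_mem (L : List ℕ) : ∃ k, (k + 1) ∉ L :=
  ⟨L.foldr max 0, fun h => absurd (le_foldr_max L _ h) (by omega)⟩

noncomputable def mmiss (L : List ℕ) : ℕ := Nat.find (exists_succ_not_mem L)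

lemma mmiss_not_mem (L : List ℕ) : (mmiss L + 1) ∉ L := Nat.find_spec (exists_succ_not_mem L)

lemma mmiss_min {L : List ℕ} {k : ℕ} (h : k < mmiss L) : (k + 1) ∈ L :=
  not_not.1 (Nat.find_min (exists_succ_not_mem L) h)

lemma mmiss_le {L : List ℕ} {k : ℕ} (h : (k + 1) ∉ L) : mmiss L ≤ k :=
  Nat.find_min' (exists_succ_not_mem L) h

def lmiss (L : List ℕ) (N : ℕ) : ℕ :=
  (List.range N).foldl
    (fun c k => if L.findIdx (fun x => x == k + 1) < L.length ∧ c = k then k + 1 else c) 0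

lemma findIdx_lt_iff_mem (L : List ℕ) (v : ℕ) :
    L.findIdx (fun x => x == v) < L.length ↔ v ∈ L := by
  constructor
  · intro h
    have h2 := List.findIdx_getElem (p := fun x => x == v) (xs := L) (w := h)
    have h3 : L[L.findIdx (fun x => x == v)] ∈ L := List.getElem_mem _
    have h4 : L[L.findIdx (fun x => x == v)] = v := by simpa using h2
    exact h4 ▸ h3
  · intro h
    exact List.findIdx_lt_length_of_exists ⟨v, h, by simp⟩

lemma lmiss_eq (L : List ℕ) (N : ℕ) : lmiss L N = min (mmiss L) N := by
  induction N with
  | zero => simp [lmiss]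
  | succ N ih =>
    unfold lmiss at ih ⊢
    rw [List.range_succ, List.foldl_append, ih]
    simp only [List.foldl_cons, List.foldl_nil]
    rcases le_or_gt (mmiss L) N with h | h
    · rw [min_eq_left h]
      have hneg : ¬(L.findIdx (fun x => x == N + 1) < L.length ∧ mmiss L = N) := by
        rintro ⟨h1, h2⟩
        exact mmiss_not_mem L (by rw [h2]; exact (findIdx_lt_iff_mem _ _).1 h1)
      rw [if_neg hneg, min_eq_left (le_trans h (Nat.le_succ N))]
    · rw [min_eq_right (by omega)]
      have hm : (N + 1) ∈ L := mmiss_min h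
      rw [if_pos ⟨(findIdx_lt_iff_mem _ _).2 hm, rfl⟩, min_eq_right (by omega)]



def seg (l : List ℕ) (t : ℕ) : List ℕ := (List.range t).map fun i => l.getD i 0

@[simp] lemma initSeg_length (p : Baire) (m : ℕ) : (initSeg p m).length = m := by
  simp [initSeg]

lemma initSeg_getD {p : Baire} {i m : ℕ} (h : i < m) : (initSeg p m).getD i 0 = p i := by
  rw [initSeg, List.getD_eq_getElem?_getD]
  simp [List.getElem?_map, List.getElem?_range h]

lemma mem_initSeg {p : Baire} {x m : ℕ} : x ∈ initSeg p m ↔ ∃ i < m, p i = x := by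
  simp [initSeg]

lemma initSeg_prefix (p : Baire) {m m' : ℕ} (h : m ≤ m') : initSeg p m <+: initSeg p m' := by
  refine List.IsPrefix.map p ?_
  have : (List.range m').take m = List.range m := by rw [List.take_range, Nat.min_eq_left h]
  exact this ▸ List.take_prefix _ _

lemma seg_initSeg {p : Baire} {t m : ℕ} (h : t ≤ m) : seg (initSeg p m) t = initSeg p t := by
  unfold seg initSeg
  refine List.map_congr_left fun i hi => ?_
  exact initSeg_getD (lt_of_lt_of_le (List.mem_range.1 hi) h)

lemma getD_of_prefix {l l' : List ℕ} (h : l <+: l') {i : ℕ} (hi : i < l.length) :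
    l.getD i 0 = l'.getD i 0 := by
  obtain ⟨u, rfl⟩ := h
  rw [List.getD_append _ _ _ _ hi]

lemma seg_of_prefix {l l' : List ℕ} (h : l <+: l') {t : ℕ} (ht : t ≤ l.length) :
    seg l t = seg l' t := by
  unfold seg
  exact List.map_congr_left fun i hi =>
    getD_of_prefix h (lt_of_lt_of_le (List.mem_range.1 hi) ht)


def cW (l : List ℕ) (t : ℕ) : ℕ := lmiss (seg l t) (t + 1)

def cP (p : Baire) (t : ℕ) : ℕ := cW (initSeg p t) t

lemma cW_initSeg {p : Baire} {t m : ℕ} (h : t ≤ m) : cW (initSeg p m) t = cP p t := by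
  unfold cP cW
  rw [seg_initSeg h, seg_initSeg (le_refl t)]

lemma cW_of_prefix {l l' : List ℕ} (h : l <+: l') {t : ℕ} (ht : t ≤ l.length) :
    cW l t = cW l' t := by
  unfold cW; rw [seg_of_prefix h ht]

lemma cP_eq (p : Baire) (t : ℕ) : cP p t = min (mmiss (initSeg p t)) (t + 1) := by
  unfold cP cW
  rw [seg_initSeg (le_refl t), lmiss_eq]

section Main

variable {p : Baire} {A : Set ℕ} (hpA : repClosedNat p A) (hA : A.Nonempty)
include hpA hA

lemma mmiss_initSeg_le (t : ℕ) : mmiss (initSeg p t) ≤ sInf A := by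
  refine mmiss_le fun hmem => ?_
  obtain ⟨i, _, hi⟩ := mem_initSeg.1 hmem
  exact ((hpA (sInf A)).1 (Nat.sInf_mem hA)) ⟨i, hi⟩

lemma cP_le (t : ℕ) : cP p t ≤ sInf A := by
  rw [cP_eq]
  exact le_trans (min_le_left _ _) (mmiss_initSeg_le hpA hA t)

omit hpA hA in
lemma cP_mono {t t' : ℕ} (h : t ≤ t') : cP p t ≤ cP p t' := by
  rw [cP_eq, cP_eq]
  refine min_le_min ?_ (by omega)
  refine mmiss_le fun hmem => ?_
  refine mmiss_not_mem (initSeg p t') ?_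
  obtain ⟨i, hi, hv⟩ := mem_initSeg.1 hmem
  exact mem_initSeg.2 ⟨i, lt_of_lt_of_le hi h, hv⟩

lemma exists_cP_eq : ∃ s, cP p s = sInf A := by
  have key : ∀ b, (∀ k < b, ∃ i, p i = k + 1) → ∃ t, ∀ k < b, (k + 1) ∈ initSeg p t := by
    intro b
    induction b with
    | zero => exact fun _ => ⟨0, fun k hk => absurd hk (by omega)⟩
    | succ b ih =>
      intro hb
      obtain ⟨t, ht⟩ := ih fun k hk => hb k (by omega)
      obtain ⟨i, hi⟩ := hb b (by omega)
      refine ⟨max t (i + 1), fun k hk => ?_⟩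
      rcases Nat.lt_succ_iff_lt_or_eq.1 hk with hk | rfl
      · obtain ⟨j, hj, hv⟩ := mem_initSeg.1 (ht k hk)
        exact mem_initSeg.2 ⟨j, by omega, hv⟩
      · exact mem_initSeg.2 ⟨i, by omega, hi⟩
  obtain ⟨t, ht⟩ := key (sInf A) fun k hk =>
    not_not.1 fun hn => (Nat.notMem_of_lt_sInf hk) ((hpA k).2 hn)
  refine ⟨max t (sInf A), ?_⟩
  refine le_antisymm (cP_le hpA hA _) ?_
  rw [cP_eq]
  refine le_min ?_ (by omega)
  by_contra hlt
  push_neg at hlt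
  refine mmiss_not_mem (initSeg p (max t (sInf A))) ?_
  obtain ⟨j, hj, hv⟩ := mem_initSeg.1 (ht _ hlt)
  exact mem_initSeg.2 ⟨j, by omega, hv⟩


lemma cP_eventually {s : ℕ} (hs : cP p s = sInf A) {t : ℕ} (ht : s ≤ t) : cP p t = sInf A :=
  le_antisymm (cP_le hpA hA t) (hs ▸ cP_mono ht)

end Main

def hFin (l : List ℕ) (i : ℕ) : ℕ :=
  if i.unpair.1.unpair.2 ≤ i.unpair.2 ∧
     (cW l i.unpair.2 ≠ i.unpair.1.unpair.1 ∨
      (0 < i.unpair.1.unpair.2 ∧ cW l (i.unpair.1.unpair.2 - 1) = i.unpair.1.unpair.1))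
  then i.unpair.1 + 1 else 0

def Hhard (p : Baire) : Baire := fun i => hFin (initSeg p (i + 1)) i

lemma hFin_of_prefix {l l' : List ℕ} (h : l <+: l') {i : ℕ} (hi : i < l.length) :
    hFin l i = hFin l' i := by
  unfold hFin
  have hb1 : i.unpair.1 ≤ i := Nat.unpair_left_le i
  have hb2 : i.unpair.1.unpair.2 ≤ i.unpair.1 := Nat.unpair_right_le _
  have ht : i.unpair.2 ≤ l.length := le_trans (Nat.unpair_right_le i) (le_of_lt hi)
  rw [cW_of_prefix h ht, cW_of_prefix h (by omega : i.unpair.1.unpair.2 - 1 ≤ l.length)]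

lemma Hhard_eq (p : Baire) (i : ℕ) :
    Hhard p i =
      if i.unpair.1.unpair.2 ≤ i.unpair.2 ∧
         (cP p i.unpair.2 ≠ i.unpair.1.unpair.1 ∨
          (0 < i.unpair.1.unpair.2 ∧ cP p (i.unpair.1.unpair.2 - 1) = i.unpair.1.unpair.1))
      then i.unpair.1 + 1 else 0 := by
  unfold Hhard hFin
  have hb1 : i.unpair.1 ≤ i := Nat.unpair_left_le i
  have hb2 : i.unpair.1.unpair.2 ≤ i.unpair.1 := Nat.unpair_right_le _
  have ht : i.unpair.2 ≤ i + 1 := le_trans (Nat.unpair_right_le i) (by omega)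
  rw [cW_initSeg ht, cW_initSeg (by omega : i.unpair.1.unpair.2 - 1 ≤ i + 1)]

section Main2

variable {p : Baire} {A : Set ℕ} (hpA : repClosedNat p A) (hA : A.Nonempty)
include hpA hA

lemma Hhard_names : repClosedNat (Hhard p)
    {Nat.pair (sInf A) (Nat.find (exists_cP_eq hpA hA))} := by
  set a0 := sInf A with ha0
  set s0 := Nat.find (exists_cP_eq hpA hA) with hs0
  have hspec : cP p s0 = a0 := Nat.find_spec (exists_cP_eq hpA hA)
  have hev : ∀ t, s0 ≤ t → cP p t = a0 := fun t ht => cP_eventually hpA hA hspec ht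
  have hmin : ∀ t, t < s0 → cP p t ≠ a0 := fun t ht => Nat.find_min (exists_cP_eq hpA hA) ht
  intro n
  simp only [Set.mem_singleton_iff]
  have hiff : (∃ i, Hhard p i = n + 1) ↔
      ∃ t, n.unpair.2 ≤ t ∧ (cP p t ≠ n.unpair.1 ∨
        (0 < n.unpair.2 ∧ cP p (n.unpair.2 - 1) = n.unpair.1)) := by
    constructor
    · rintro ⟨i, hi⟩
      rw [Hhard_eq] at hi
      by_cases hc : i.unpair.1.unpair.2 ≤ i.unpair.2 ∧
          (cP p i.unpair.2 ≠ i.unpair.1.unpair.1 ∨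
           (0 < i.unpair.1.unpair.2 ∧ cP p (i.unpair.1.unpair.2 - 1) = i.unpair.1.unpair.1))
      · rw [if_pos hc] at hi
        have hn : i.unpair.1 = n := by omega
        rw [hn] at hc
        exact ⟨i.unpair.2, hc⟩
      · rw [if_neg hc] at hi; omega
    · rintro ⟨t, h1, h2⟩
      refine ⟨Nat.pair n t, ?_⟩
      rw [Hhard_eq, Nat.unpair_pair]
      simp only
      rw [if_pos ⟨h1, h2⟩]
  constructor
  · rintro rfl
    rw [hiff]
    rintro ⟨t, h1, h2⟩
    rw [Nat.unpair_pair] at h1 h2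
    simp only at h1 h2
    rcases h2 with h2 | ⟨h2, h3⟩
    · exact h2 (hev t h1)
    · exact hmin (s0 - 1) (by omega) h3
  · intro hn
    rw [hiff] at hn
    push_neg at hn
    have ha : cP p (max n.unpair.2 s0) = n.unpair.1 :=
      (hn (max n.unpair.2 s0) (le_max_left _ _)).1
    have haa : n.unpair.1 = a0 := by rw [← ha, hev _ (le_max_right _ _)]
    have hcs : cP p n.unpair.2 = a0 := haa ▸ (hn n.unpair.2 (le_refl _)).1
    have hle : s0 ≤ n.unpair.2 := Nat.find_min' _ hcs
    have heq : n.unpair.2 = s0 := by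
      by_contra hne
      have h1 : 0 < n.unpair.2 := by omega
      have h2 : cP p (n.unpair.2 - 1) = a0 := hev _ (by omega)
      exact (hn n.unpair.2 (le_refl _)).2 h1 (by rwa [haa])
    have : n = Nat.pair a0 s0 := by rw [← haa, ← heq, Nat.pair_unpair]
    simpa [ha0, hs0] using this

end Main2

def φH (l : List ℕ) : List ℕ := (List.range l.length).map (hFin l)

def KofG (g : ℕ → ℕ) (r : Baire) : Baire := fun _ => g (r 1)

def φK (g : ℕ → ℕ) (l : List ℕ) : List ℕ := (List.range (l.length - 1)).map fun _ => g (l.getD 1 0)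


open Primrec in
lemma lmiss_primrec : Primrec₂ lmiss := by
  have fidx : Primrec fun q : (List ℕ × ℕ) × (ℕ × ℕ) =>
      q.1.1.findIdx (fun x => x == q.2.2 + 1) := by
    refine list_findIdx (fst.comp fst) ?_
    exact (Primrec.beq.comp snd (succ.comp (snd.comp (snd.comp fst)))).to₂
  have len : Primrec fun q : (List ℕ × ℕ) × (ℕ × ℕ) => q.1.1.length :=
    list_length.comp (fst.comp fst)
  have cond : PrimrecPred fun q : (List ℕ × ℕ) × (ℕ × ℕ) =>
      q.1.1.findIdx (fun x => x == q.2.2 + 1) < q.1.1.length ∧ q.2.1 = q.2.2 :=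
    (nat_lt.comp fidx len).and (Primrec.eq.comp (fst.comp snd) (snd.comp snd))
  have hstep : Primrec₂ fun (a : List ℕ × ℕ) (ck : ℕ × ℕ) =>
      if a.1.findIdx (fun x => x == ck.2 + 1) < a.1.length ∧ ck.1 = ck.2
      then ck.2 + 1 else ck.1 :=
    (Primrec.ite cond (succ.comp (snd.comp snd)) (fst.comp snd)).to₂
  have := list_foldl (f := fun a : List ℕ × ℕ => List.range a.2)
    (g := fun _ : List ℕ × ℕ => 0)
    (list_range.comp snd) (const 0) hstep
  exact (this.of_eq fun a => rfl).to₂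

open Primrec in
lemma seg_primrec : Primrec₂ seg := by
  have : Primrec₂ fun (a : List ℕ × ℕ) (i : ℕ) => a.1.getD i 0 :=
    ((list_getD 0).comp (fst.comp fst) snd).to₂
  exact ((list_map (list_range.comp snd) this).of_eq fun a => rfl).to₂

open Primrec in
lemma cW_primrec : Primrec₂ cW :=
  (lmiss_primrec.comp (seg_primrec.comp fst snd) (succ.comp snd)).to₂

open Primrec in
lemma hFin_primrec : Primrec₂ hFin := by
  have u2 : Primrec fun a : List ℕ × ℕ => a.2.unpair.2 :=
    snd.comp (Primrec.unpair.comp snd)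
  have u1 : Primrec fun a : List ℕ × ℕ => a.2.unpair.1 :=
    fst.comp (Primrec.unpair.comp snd)
  have a' : Primrec fun a : List ℕ × ℕ => a.2.unpair.1.unpair.1 :=
    fst.comp (Primrec.unpair.comp u1)
  have s' : Primrec fun a : List ℕ × ℕ => a.2.unpair.1.unpair.2 :=
    snd.comp (Primrec.unpair.comp u1)
  have cw1 : Primrec fun a : List ℕ × ℕ => cW a.1 a.2.unpair.2 :=
    cW_primrec.comp fst u2
  have cw2 : Primrec fun a : List ℕ × ℕ => cW a.1 (a.2.unpair.1.unpair.2 - 1) :=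
    cW_primrec.comp fst (nat_sub.comp s' (const 1))
  have cond : PrimrecPred fun a : List ℕ × ℕ =>
      a.2.unpair.1.unpair.2 ≤ a.2.unpair.2 ∧
      (cW a.1 a.2.unpair.2 ≠ a.2.unpair.1.unpair.1 ∨
       (0 < a.2.unpair.1.unpair.2 ∧ cW a.1 (a.2.unpair.1.unpair.2 - 1) = a.2.unpair.1.unpair.1)) :=
    (nat_le.comp s' u2).and
      (((Primrec.eq.comp cw1 a').not).or
        ((nat_lt.comp (const 0) s').and (Primrec.eq.comp cw2 a')))
  have h := (Primrec.ite cond (succ.comp u1) (const 0)).of_eq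
    (g := fun a : List ℕ × ℕ => hFin a.1 a.2) (fun a => by simp [hFin])
  exact h.to₂

open Primrec in
lemma φH_primrec : Primrec φH :=
  ((list_map (list_range.comp list_length) hFin_primrec).of_eq fun l => rfl)

open Primrec in
lemma φK_primrec {g : ℕ → ℕ} (hg : Primrec g) : Primrec (φK g) := by
  have h2 : Primrec₂ fun (l : List ℕ) (_ : ℕ) => g (l.getD 1 0) :=
    ((hg.comp ((list_getD 0).comp fst (const 1)))).to₂
  exact (list_map (list_range.comp (nat_sub.comp list_length (const 1))) h2).of_eq fun l => rfl



lemma range_prefix {a b : ℕ} (h : a ≤ b) : List.range a <+: List.range b := by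
  have : (List.range b).take a = List.range a := by rw [List.take_range, Nat.min_eq_left h]
  exact this ▸ List.take_prefix _ _

lemma φH_mono {l l' : List ℕ} (h : l <+: l') : φH l <+: φH l' := by
  unfold φH
  have heq : (List.range l.length).map (hFin l) = (List.range l.length).map (hFin l') :=
    List.map_congr_left fun i hi => hFin_of_prefix h (List.mem_range.1 hi)
  rw [heq]
  exact List.IsPrefix.map _ (range_prefix h.length_le)

lemma φH_spec (p : Baire) (m : ℕ) : PrefixOfFun (φH (initSeg p m)) (Hhard p) := by
  intro i
  have him : (i : ℕ) < m := by have := i.isLt; simpa [φH] using this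
  show (φH (initSeg p m)).get i = Hhard p i
  rw [List.get_eq_getElem]
  simp only [φH, Hhard, List.getElem_map, List.getElem_range]
  exact (hFin_of_prefix (initSeg_prefix p him) (by simp)).symm

lemma Hhard_computableOn (D : Set Baire) : ComputableOn Hhard D :=
  ⟨φH, φH_primrec.to_comp, fun _ _ h => φH_mono h,
    fun p _ => ⟨φH_spec p, fun n => ⟨n, by simp [φH]⟩⟩⟩

lemma φK_mono (g : ℕ → ℕ) {l l' : List ℕ} (h : l <+: l') : φK g l <+: φK g l' := by
  rcases le_or_gt l.length 1 with hl | hl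
  · have h0 : l.length - 1 = 0 := by omega
    simp [φK, h0]
  · unfold φK
    rw [getD_of_prefix h hl]
    exact List.IsPrefix.map _ (range_prefix (by have := h.length_le; omega))

lemma φK_spec (g : ℕ → ℕ) (r : Baire) (m : ℕ) :
    PrefixOfFun (φK g (initSeg r m)) (KofG g r) := by
  intro i
  have him : (i : ℕ) < m - 1 := by have := i.isLt; simpa [φK] using this
  show (φK g (initSeg r m)).get i = KofG g r i
  rw [List.get_eq_getElem]
  simp only [φK, KofG, List.getElem_map]
  rw [initSeg_getD (by omega : 1 < m)]

lemma KofG_computableOn {g : ℕ → ℕ} (hg : Primrec g) (D : Set Baire) :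
    ComputableOn (KofG g) D :=
  ⟨φK g, (φK_primrec hg).to_comp, fun _ _ h => φK_mono g h,
    fun r _ => ⟨φK_spec g r, fun n => ⟨n + 1, by simp [φK]⟩⟩⟩

lemma initSeg_prefixOfFun (p : Baire) (m : ℕ) : PrefixOfFun (initSeg p m) p := by
  intro i
  rw [List.get_eq_getElem]
  simp [initSeg]

lemma id_computableOn (D : Set Baire) : ComputableOn id D :=
  ⟨id, Computable.id, fun _ _ h => h,
    fun p _ => ⟨fun m => initSeg_prefixOfFun p m, fun n => ⟨n, by simp [initSeg]⟩⟩⟩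

lemma pairB_one (p q : Baire) : pairB p q 1 = q 0 := by norm_num [pairB]

/-- Closed choice on ℕ is Weihrauch equivalent to unique closed choice on ℕ. -/
theorem CN_equivW_UCN : WEquiv repClosedNat repNat repClosedNat repNat CN UCN := by
  constructor
  · -- CN ≤_W UCN
    refine ⟨Hhard, KofG (fun n => n.unpair.1), Hhard_computableOn _, fun G hG =>
      ⟨KofG_computableOn (Primrec.fst.comp Primrec.unpair) _, ?_⟩⟩
    intro p x hpx hne
    have hne' : x.Nonempty := hne
    have hname := Hhard_names hpx hne'
    set n0 := Nat.pair (sInf x) (Nat.find (exists_cP_eq hpx hne')) with hn0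
    have hGs := hG (Hhard p) {n0} hname ⟨n0, by simp [UCN]⟩
    obtain ⟨y, hy1, hy2⟩ := hGs
    have hy2' : ({n0} : Set ℕ) = {y} := hy2
    have hyy : y = n0 := (Set.singleton_eq_singleton_iff.1 hy2').symm
    refine ⟨sInf x, ?_, Nat.sInf_mem hne'⟩
    show KofG (fun n => n.unpair.1) (pairB p (G (Hhard p))) 0 = sInf x
    have h1 : pairB p (G (Hhard p)) 1 = G (Hhard p) 0 := pairB_one _ _
    have hy1' : G (Hhard p) 0 = y := hy1
    simp only [KofG, h1, hy1', hyy, hn0, Nat.unpair_pair]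
  · -- UCN ≤_W CN
    refine ⟨id, KofG id, id_computableOn _, fun G hG =>
      ⟨KofG_computableOn Primrec.id _, ?_⟩⟩
    intro p x hpx hne
    obtain ⟨n, hn⟩ := hne
    have hxn : x = {n} := hn
    have hx : (CN x).Nonempty := ⟨n, by rw [show (CN x : Set ℕ) = {n} from hxn]; rfl⟩
    obtain ⟨y, hy1, hy2⟩ := hG p x hpx hx
    have hyn : y = n := by
      have : y ∈ ({n} : Set ℕ) := hxn ▸ hy2
      simpa using this
    refine ⟨n, ?_, hn⟩
    show KofG id (pairB p (G (id p))) 0 = n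
    have hy1' : G p 0 = y := hy1
    simp only [KofG, id_eq]
    rw [pairB_one, hy1', hyn]


end WL
end

section
/- For any p ∈ {0,1}^N with Σ_{n≥1} (−1)^{p(n)}/n convergent, and any target value M ∈ R, there exist finitely many positions j_0 < ... < j_k with p(j_l) = 0 such that the sequence q obtained by setting q(j_l) = 1 and q(m) = p(m) elsewhere satisfies Σ_{n≥1} (−1)^{q(n)}/n ≥ M. -/
/- Common background: type-two computability on Baire space, represented spaces
(representations as functional relations), Weihrauch reducibility, Cantor space,
Martin-Löf tests, Martin-Löf randomness, and the basic multivalued functions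
`C_ℕ`, `d_MLR`, `LAY`, the layer map and layerwise computability. -/

namespace WL

/-- If `Σ_{n≥1} (-1)^{p(n)}/n` converges (with the convention that flipping a bit of
`p` from `0` to `1` changes the sum by `+2/n`), then for any target `M` one can flip
finitely many `0`s of `p` to `1`s so that the resulting series converges to a value `≥ M`. -/
theorem harmonic_flip_above (p : ℕ → Bool)
    (hconv : ∃ L : ℝ, Filter.Tendsto
      (fun N => ∑ n ∈ Finset.range N, (if p n then (1 : ℝ) else -1) / (n : ℝ))
      Filter.atTop (nhds L))
    (M : ℝ) :
    ∃ s : Finset ℕ, (∀ j ∈ s, p j = false) ∧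
      ∃ q : ℕ → Bool, (∀ m, q m = if m ∈ s then true else p m) ∧
        ∃ L' : ℝ, Filter.Tendsto
          (fun N => ∑ n ∈ Finset.range N, (if q n then (1 : ℝ) else -1) / (n : ℝ))
          Filter.atTop (nhds L') ∧ M ≤ L' := by
  obtain ⟨L, hL⟩ := hconv
  set F : ℕ → ℝ := fun N => ∑ n ∈ Finset.range N, (if p n then 0 else 1 / (n : ℝ)) with hF
  have hH : Filter.Tendsto (fun N => ∑ n ∈ Finset.range N, 1 / (n : ℝ))
      Filter.atTop Filter.atTop := by
    refine (not_summable_iff_tendsto_nat_atTop_of_nonneg ?_).mp ?_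
    · intro n; positivity
    · exact Real.not_summable_one_div_natCast
  have key : ∀ N, F N = ((∑ n ∈ Finset.range N, 1 / (n : ℝ)) -
      (∑ n ∈ Finset.range N, (if p n then (1 : ℝ) else -1) / (n : ℝ))) / 2 := by
    intro N
    rw [← Finset.sum_sub_distrib, Finset.sum_div]
    refine Finset.sum_congr rfl fun n _ => ?_
    by_cases h : p n <;> simp [h] <;> ring
  have hFtop : Filter.Tendsto F Filter.atTop Filter.atTop := by
    have : Filter.Tendsto (fun N => ((∑ n ∈ Finset.range N, 1 / (n : ℝ)) -
        (∑ n ∈ Finset.range N, (if p n then (1 : ℝ) else -1) / (n : ℝ))) / 2)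
        Filter.atTop Filter.atTop :=
      (hH.atTop_add hL.neg).atTop_div_const two_pos
    exact this.congr fun N => (key N).symm
  obtain ⟨N, hN⟩ := (hFtop.eventually_ge_atTop ((M - L) / 2)).exists
  refine ⟨(Finset.range N).filter fun j => p j = false, fun j hj => (Finset.mem_filter.mp hj).2,
    fun m => if m ∈ (Finset.range N).filter fun j => p j = false then true else p m,
    fun m => rfl, L + 2 * F N, ?_, ?_⟩
  · set s := (Finset.range N).filter fun j => p j = false with hs
    have hsum_s : ∑ j ∈ s, 2 / (j : ℝ) = 2 * F N := by
      rw [hF, Finset.mul_sum, hs, Finset.sum_filter]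
      refine Finset.sum_congr rfl fun n _ => ?_
      by_cases h : p n <;> simp [h] <;> ring
    have heq : ∀ᶠ N' in Filter.atTop, (∑ n ∈ Finset.range N',
        (if (if n ∈ s then true else p n) then (1 : ℝ) else -1) / (n : ℝ)) =
        (∑ n ∈ Finset.range N', (if p n then (1 : ℝ) else -1) / (n : ℝ)) + 2 * F N := by
      filter_upwards [Filter.eventually_ge_atTop N] with N' hN'
      have h1 : ∑ n ∈ Finset.range N',
          (if (if n ∈ s then true else p n) then (1 : ℝ) else -1) / (n : ℝ) =
          ∑ n ∈ Finset.range N', ((if p n then (1 : ℝ) else -1) / (n : ℝ) +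
            if n ∈ s then 2 / (n : ℝ) else 0) := by
        refine Finset.sum_congr rfl fun n _ => ?_
        by_cases hn : n ∈ s
        · have : p n = false := (Finset.mem_filter.mp hn).2
          simp [hn, this]; ring
        · simp [hn]
      rw [h1, Finset.sum_add_distrib, Finset.sum_ite_mem]
      have : Finset.range N' ∩ s = s := by
        apply Finset.inter_eq_right.mpr
        exact (Finset.filter_subset _ _).trans (Finset.range_subset_range.mpr hN')
      rw [this, hsum_s]
    exact (hL.add_const (2 * F N)).congr' (Filter.EventuallyEq.symm heq)
  · linarith


end WL
end
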